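/- Let U(0) and U(α) be the 4×4 unitaries given in Eqs. (S: Usol zero/nonzero), namely U(0) = (1/√2)·[[1,i,0,0],[i,1,0,0],[0,0,−1,−i],[0,0,−i,−1]] and U(α) = (1/√2)·[[i,1,0,0],[−1,−i,0,0],[0,0,i,1],[0,0,−1,−i]]. Then for the input state ρ_h ⊗ ρ_m with arbitrary one-qubit density matrix ρ_h and ρ_m = (1/2)(|0⟩+i|1⟩)(⟨0|−i⟨1|), the reduced state of the second (measurement) qubit after applying U(0) is |1⟩⟨1| and after applying U(α) is |0⟩⟨0|; hence measuring the second qubit in the computational basis perfectly discriminates the two cases regardless of ρ_h. -/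

import Mathlib

open Matrix Kronecker ComplexOrder

/-- Partial trace over the hidden (first) qubit. -/
noncomputable def ptraceH (M : Matrix (Fin 2 × Fin 2) (Fin 2 × Fin 2) ℂ) :
    Matrix (Fin 2) (Fin 2) ℂ :=
  Matrix.of fun i j => ∑ k : Fin 2, M (k, i) (k, j)

/-- `U(0) = (1/√2)·[[1,i,0,0],[i,1,0,0],[0,0,−1,−i],[0,0,−i,−1]]` (block form). -/
noncomputable def U₀ : Matrix (Fin 2 × Fin 2) (Fin 2 × Fin 2) ℂ :=
  ((Real.sqrt 2 : ℂ))⁻¹ •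
    ((!![1, 0; 0, 0] : Matrix (Fin 2) (Fin 2) ℂ) ⊗ₖ !![1, Complex.I; Complex.I, 1] +
      (!![0, 0; 0, 1] : Matrix (Fin 2) (Fin 2) ℂ) ⊗ₖ !![-1, -Complex.I; -Complex.I, -1])

/-- `U(α) = (1/√2)·[[i,1,0,0],[−1,−i,0,0],[0,0,i,1],[0,0,−1,−i]]` (block form). -/
noncomputable def Uα : Matrix (Fin 2 × Fin 2) (Fin 2 × Fin 2) ℂ :=
  ((Real.sqrt 2 : ℂ))⁻¹ •
    ((1 : Matrix (Fin 2) (Fin 2) ℂ) ⊗ₖ !![Complex.I, 1; -1, -Complex.I])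

/-- `ρ_m = (1/2)(|0⟩+i|1⟩)(⟨0|−i⟨1|)`. -/
noncomputable def ρm : Matrix (Fin 2) (Fin 2) ℂ :=
  (1 / 2 : ℂ) • !![1, -Complex.I; Complex.I, 1]

set_option maxHeartbeats 2000000 in
/-- For any one-qubit density matrix `ρ_h`, the reduced state of the measurement qubit
after `U(0)` is `|1⟩⟨1|` and after `U(α)` is `|0⟩⟨0|`: perfect discrimination regardless
of the hidden state. -/
theorem stmt_15 (ρh : Matrix (Fin 2) (Fin 2) ℂ) (hρh : ρh.PosSemidef) (htr : ρh.trace = 1) :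
    ptraceH (U₀ * (ρh ⊗ₖ ρm) * star U₀) = !![0, 0; 0, 1] ∧
    ptraceH (Uα * (ρh ⊗ₖ ρm) * star Uα) = !![1, 0; 0, 0] := by
  have htr' : ρh 0 0 + ρh 1 1 = 1 := by
    simpa [Matrix.trace, Fin.sum_univ_two] using htr
  have hsub : ρh 1 1 = 1 - ρh 0 0 := by linear_combination htr'
  have h2 : ((Real.sqrt 2 : ℝ) : ℂ) ^ 2 = 2 := by
    norm_cast; rw [sq]; exact Real.mul_self_sqrt (by norm_num)
  have h3 : ((Real.sqrt 2 : ℝ) : ℂ) ^ 3 = 2 * ((Real.sqrt 2 : ℝ) : ℂ) := by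
    rw [show ((Real.sqrt 2 : ℝ) : ℂ) ^ 3 = ((Real.sqrt 2 : ℝ) : ℂ)^2 * ((Real.sqrt 2 : ℝ) : ℂ) by ring, h2]
  have h4 : ((Real.sqrt 2 : ℝ) : ℂ) ^ 4 = 4 := by
    rw [show ((Real.sqrt 2 : ℝ) : ℂ) ^ 4 = (((Real.sqrt 2 : ℝ) : ℂ)^2)^2 by ring, h2]; norm_num
  have h5 : ((Real.sqrt 2 : ℝ) : ℂ) ^ 5 = 4 * ((Real.sqrt 2 : ℝ) : ℂ) := by
    rw [show ((Real.sqrt 2 : ℝ) : ℂ) ^ 5 = ((Real.sqrt 2 : ℝ) : ℂ)^4 * ((Real.sqrt 2 : ℝ) : ℂ) by ring, h4]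
  have h6 : ((Real.sqrt 2 : ℝ) : ℂ) ^ 6 = 8 := by
    rw [show ((Real.sqrt 2 : ℝ) : ℂ) ^ 6 = (((Real.sqrt 2 : ℝ) : ℂ)^2)^3 by ring, h2]; norm_num
  have h7 : ((Real.sqrt 2 : ℝ) : ℂ) ^ 7 = 8 * ((Real.sqrt 2 : ℝ) : ℂ) := by
    rw [show ((Real.sqrt 2 : ℝ) : ℂ) ^ 7 = ((Real.sqrt 2 : ℝ) : ℂ)^6 * ((Real.sqrt 2 : ℝ) : ℂ) by ring, h6]
  have h8 : ((Real.sqrt 2 : ℝ) : ℂ) ^ 8 = 16 := by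
    rw [show ((Real.sqrt 2 : ℝ) : ℂ) ^ 8 = (((Real.sqrt 2 : ℝ) : ℂ)^2)^4 by ring, h2]; norm_num
  have h10 : ((Real.sqrt 2 : ℝ) : ℂ) ^ 10 = 32 := by
    rw [show ((Real.sqrt 2 : ℝ) : ℂ) ^ 10 = (((Real.sqrt 2 : ℝ) : ℂ)^2)^5 by ring, h2]; norm_num
  have hI3 : Complex.I ^ 3 = -Complex.I := by
    rw [show Complex.I ^ 3 = Complex.I^2 * Complex.I by ring, Complex.I_sq]; ring
  have hI4 : Complex.I ^ 4 = 1 := by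
    rw [show Complex.I ^ 4 = (Complex.I^2)^2 by ring, Complex.I_sq]; norm_num
  constructor <;>
  · ext i j
    fin_cases i <;> fin_cases j <;>
    · simp only [ptraceH, U₀, Uα, ρm, Matrix.mul_apply, Fin.sum_univ_two,
        Matrix.star_apply, Matrix.kroneckerMap_apply, Fintype.sum_prod_type, Matrix.smul_apply,
        Matrix.add_apply, Matrix.one_apply, Matrix.of_apply, Matrix.cons_val',
        Matrix.cons_val_zero, Matrix.cons_val_one, Matrix.head_cons,
        Matrix.head_fin_const, Matrix.empty_val', Matrix.cons_val_fin_one,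
        star_mul', star_smul, smul_eq_mul, Fin.zero_eta, Fin.mk_one, Fin.isValue,
          Matrix.cons_val_succ, zero_ne_one, one_ne_zero, if_true, if_false, ↓reduceIte]
      simp only [Complex.star_def, _root_.map_mul, map_inv₀, Complex.conj_ofReal,
        Complex.conj_I, _root_.map_one, map_ofNat, map_neg, star_one, star_zero,
        map_add, map_zero]
      field_simp
      try simp only [hsub]
      ring_nf
      first
        | (simp only [h2, h3, h4, h5, h6, h7, h8, h10, Complex.I_sq, hI3, hI4]; done)
        | (simp only [h2, h3, h4, h5, h6, h7, h8, h10, Complex.I_sq, hI3, hI4]; ring1)
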